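/- Let Y be a measurable space, π a probability measure on Y, and r : Y → ℝ measurable, with π a continuous model for r. Then for every N ≥ 1 and every measurable set A ⊆ Y, the Best-of-N distribution satisfies π^{⊗N}{(y₁,…,y_N) ∈ Y^N : there exists i with y_i ∈ A and r(y_j) < r(y_i) for all j ≠ i} = N · ∫_A C_{r,π}(y)^{N−1} dπ(y); i.e., the law of the highest-reward sample among N i.i.d. draws from π has density N·C_{r,π}^{N−1} with respect to π. -/

import Mathlib

open MeasureTheory

/-- For a continuous model, the Best-of-`N` distribution (the law of the
highest-reward sample among `N` i.i.d. draws from `π`) has density `N·C_{r,π}^{N−1}`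
with respect to `π`. -/
theorem stmt_8 {Y : Type*} [MeasurableSpace Y]
    (π : Measure Y) [IsProbabilityMeasure π]
    (r : Y → ℝ) (hr : Measurable r)
    (hcont : ∀ t : ℝ, π {z | r z = t} = 0)
    (C : Y → ℝ)
    (hC : ∀ y, C y = (π {z | r z < r y}).toReal + (1 / 2) * (π {z | r z = r y}).toReal)
    (N : ℕ) (hN : 1 ≤ N) (A : Set Y) (hA : MeasurableSet A) :
    ((Measure.pi fun _ : Fin N => π)
        {f : Fin N → Y | ∃ i, f i ∈ A ∧ ∀ j, j ≠ i → r (f j) < r (f i)}).toReal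
      = N * ∫ y in A, C y ^ (N - 1) ∂π := by
  classical
  set g : Y → ENNReal := fun y => π {z | r z < r y} with hgdef
  have hgmeas : Measurable g := by
    have hF : Monotone (fun t : ℝ => π {z | r z < t}) := fun s t hst =>
      measure_mono fun z hz => lt_of_lt_of_le hz hst
    exact hF.measurable.comp hr
  have hg_ne_top : ∀ y, g y ≠ ⊤ := fun y => (measure_lt_top π _).ne
  have hCg : ∀ y, C y = (g y).toReal := by
    intro y
    rw [hC y, hcont (r y)]
    simp
    rfl
  -- the family of disjoint events
  set S : Fin N → Set (Fin N → Y) :=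
    fun i => {f | f i ∈ A ∧ ∀ j, j ≠ i → r (f j) < r (f i)} with hSdef
  have hSmeas : ∀ i, MeasurableSet (S i) := by
    intro i
    have h1 : MeasurableSet {f : Fin N → Y | f i ∈ A} := (measurable_pi_apply i) hA
    have h2 : ∀ j : Fin N, MeasurableSet {f : Fin N → Y | j ≠ i → r (f j) < r (f i)} := by
      intro j
      by_cases hji : j = i
      · simp [hji]
      · have : {f : Fin N → Y | j ≠ i → r (f j) < r (f i)}
            = {f : Fin N → Y | r (f j) < r (f i)} := by
          ext f; simp [hji]
        rw [this]
        exact measurableSet_lt (hr.comp (measurable_pi_apply j))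
          (hr.comp (measurable_pi_apply i))
    have : S i = {f : Fin N → Y | f i ∈ A} ∩ ⋂ j, {f | j ≠ i → r (f j) < r (f i)} := by
      ext f; simp [hSdef]
    rw [this]
    exact h1.inter (MeasurableSet.iInter h2)
  have hdisj : Pairwise (Function.onFun Disjoint S) := by
    intro i j hij
    rw [Function.onFun, Set.disjoint_left]
    rintro f ⟨_, hfi⟩ ⟨_, hfj⟩
    exact lt_asymm (hfi j (Ne.symm hij)) (hfj i hij)
  have hunion : {f : Fin N → Y | ∃ i, f i ∈ A ∧ ∀ j, j ≠ i → r (f j) < r (f i)}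
      = ⋃ i, S i := by
    ext f; simp [hSdef]
  -- key computation for each i
  have key : ∀ i, (Measure.pi fun _ : Fin N => π) (S i)
      = ∫⁻ y in A, g y ^ (N - 1) ∂π := by
    intro i
    set p : Fin N → Prop := fun j => j = i with hpdef
    haveI : Unique {j : Fin N // p j} := ⟨⟨⟨i, rfl⟩⟩, fun x => Subtype.ext x.2⟩
    have hcard : Fintype.card {j : Fin N // ¬ p j} = N - 1 := by
      rw [Fintype.card_subtype_compl, Fintype.card_subtype_eq, Fintype.card_fin]
    set e := MeasurableEquiv.piEquivPiSubtypeProd (fun _ : Fin N => Y) p with hedef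
    have hmp := measurePreserving_piEquivPiSubtypeProd (fun _ : Fin N => π) p
    set T : Set (({j : Fin N // p j} → Y) × ({j : Fin N // ¬ p j} → Y)) :=
      {q | q.1 ⟨i, rfl⟩ ∈ A ∧ ∀ j, r (q.2 j) < r (q.1 ⟨i, rfl⟩)} with hTdef
    have hTmeas : MeasurableSet T := by
      have h1 : MeasurableSet {q : ({j : Fin N // p j} → Y) × ({j : Fin N // ¬ p j} → Y) |
          q.1 ⟨i, rfl⟩ ∈ A} :=
        ((measurable_pi_apply _).comp measurable_fst) hA
      have h2 : ∀ j : {j : Fin N // ¬ p j},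
          MeasurableSet {q : ({j : Fin N // p j} → Y) × ({j : Fin N // ¬ p j} → Y) |
            r (q.2 j) < r (q.1 ⟨i, rfl⟩)} := fun j =>
        measurableSet_lt (hr.comp ((measurable_pi_apply j).comp measurable_snd))
          (hr.comp ((measurable_pi_apply _).comp measurable_fst))
      have hTeq : T = {q : ({j : Fin N // p j} → Y) × ({j : Fin N // ¬ p j} → Y) |
          q.1 ⟨i, rfl⟩ ∈ A} ∩ ⋂ j, {q | r (q.2 j) < r (q.1 ⟨i, rfl⟩)} := by
        ext q; simp [hTdef]
      rw [hTeq]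
      exact h1.inter (MeasurableSet.iInter h2)
    have hpre : e ⁻¹' T = S i := by
      ext f
      simp only [hedef, MeasurableEquiv.piEquivPiSubtypeProd, hTdef, hSdef,
        Set.mem_preimage, Set.mem_setOf_eq, MeasurableEquiv.coe_mk,
        Equiv.piEquivPiSubtypeProd_apply]
      constructor
      · rintro ⟨h1, h2⟩
        exact ⟨h1, fun j hj => h2 ⟨j, hj⟩⟩
      · rintro ⟨h1, h2⟩
        exact ⟨h1, fun j => h2 j.1 j.2⟩
    rw [← hpre, hmp.measure_preimage hTmeas.nullMeasurableSet, Measure.prod_apply hTmeas]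
    have hslice : ∀ a : {j : Fin N // p j} → Y,
        (Measure.pi fun _ : {j : Fin N // ¬ p j} => π) (Prod.mk a ⁻¹' T)
          = Set.indicator A (fun y => g y ^ (N - 1)) (a ⟨i, rfl⟩) := by
      intro a
      by_cases ha : a ⟨i, rfl⟩ ∈ A
      · have hset : Prod.mk a ⁻¹' T
            = Set.pi Set.univ (fun _ : {j : Fin N // ¬ p j} =>
                {z | r z < r (a ⟨i, rfl⟩)}) := by
          ext b
          simp [hTdef, ha, Set.mem_pi]
        rw [hset, Measure.pi_pi, Set.indicator_of_mem ha, Finset.prod_const,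
          Finset.card_univ, hcard]
      · have hset : Prod.mk a ⁻¹' T = ∅ := by
          ext b; simp [hTdef, ha]
        rw [hset, Set.indicator_of_notMem ha]
        simp
    simp only [hslice]
    have hind : Measurable (Set.indicator A (fun y => g y ^ (N - 1))) :=
      (hgmeas.pow_const _).indicator hA
    have hfu := (measurePreserving_funUnique π {j : Fin N // p j}).lintegral_comp hind
    rw [Subsingleton.elim (Subtype.fintype p)
      (Unique.fintype : Fintype {j : Fin N // p j})]
    refine Eq.trans (lintegral_congr fun a => ?_) (hfu.trans (lintegral_indicator hA _))
    exact congrArg _ (congrArg a (Subsingleton.elim _ _))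
  have L_def : (Measure.pi fun _ : Fin N => π)
      {f : Fin N → Y | ∃ i, f i ∈ A ∧ ∀ j, j ≠ i → r (f j) < r (f i)}
      = N * ∫⁻ y in A, g y ^ (N - 1) ∂π := by
    rw [hunion, measure_iUnion hdisj hSmeas, tsum_fintype]
    simp only [key]
    rw [Finset.sum_const, Finset.card_univ, Fintype.card_fin, nsmul_eq_mul]
  rw [L_def]
  rw [ENNReal.toReal_mul, ENNReal.toReal_natCast]
  congr 1
  rw [← integral_toReal ((hgmeas.pow_const (N - 1)).aemeasurable.restrict)
    (Filter.Eventually.of_forall fun y =>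
      lt_of_le_of_lt (pow_le_one' (prob_le_one) _) ENNReal.one_lt_top)]
  refine integral_congr_ae (Filter.Eventually.of_forall fun y => ?_)
  show ((g y) ^ (N - 1)).toReal = C y ^ (N - 1)
  rw [hCg y, ← ENNReal.toReal_pow]
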